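/- Let β > 0 and λ^n = 1 − β/√n for n with √n > β, and for thresholds K^n > 0 define ρ₁^n = λ^n ∫₀^{K^n} t f(t) dt and ρ₂^n = λ^n ∫_{K^n}^∞ t f(t) dt. If K^n → ∞ and there exists δ ∈ (0, 1/2) such that n^{1/2−δ} F̄(K^n) → ∞ as n → ∞, then ρ₂^n / (1 − ρ₁^n) → 1 as n → ∞. -/

import Mathlib

open MeasureTheory Filter Set

/-- With `f` a probability density on `(0,∞)` with unit mean and positive
tail cdf `F̄`, arrival rates `λ^n = 1 - β/√n`, Class-1 and Class-2 traffic intensities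
`ρ₁^n = λ^n ∫₀^{K^n} t f(t) dt` and `ρ₂^n = λ^n ∫_{K^n}^∞ t f(t) dt`: if `K^n → ∞` and
`n^{1/2-δ} F̄(K^n) → ∞` for some `δ ∈ (0,1/2)`, then `ρ₂^n / (1 - ρ₁^n) → 1`. -/
theorem stmt_6
    (f : ℝ → ℝ) (hf_meas : Measurable f) (hf_nonneg : ∀ t, 0 ≤ f t)
    (hf_prob : ∫ t in Ioi (0:ℝ), f t = 1)
    (hf_mean : ∫ t in Ioi (0:ℝ), t * f t = 1)
    (Fbar : ℝ → ℝ)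
    (hFbar : ∀ x, Fbar x = 1 - ∫ t in Ioc (0:ℝ) x, f t)
    (hFbar_pos : ∀ x, 0 ≤ x → 0 < Fbar x)
    (β : ℝ) (hβ : 0 < β)
    (K : ℕ → ℝ) (hK_pos : ∀ n, 0 < K n)
    (ρ1 ρ2 : ℕ → ℝ)
    (hρ1 : ∀ n, ρ1 n = (1 - β / Real.sqrt n) * ∫ t in Ioc (0:ℝ) (K n), t * f t)
    (hρ2 : ∀ n, ρ2 n = (1 - β / Real.sqrt n) * ∫ t in Ioi (K n), t * f t)
    (hK_tendsto : Tendsto K atTop atTop)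
    (δ : ℝ) (hδ : δ ∈ Ioo (0:ℝ) (1/2))
    (hthresh : Tendsto (fun n : ℕ => (n:ℝ) ^ ((1:ℝ)/2 - δ) * Fbar (K n)) atTop atTop) :
    Tendsto (fun n : ℕ => ρ2 n / (1 - ρ1 n)) atTop (nhds 1) := by
  -- integrability
  have hInt : IntegrableOn (fun t => t * f t) (Ioi (0:ℝ)) := by
    by_contra h
    rw [integral_undef h] at hf_mean
    norm_num at hf_mean
  have hIntf : IntegrableOn f (Ioi (0:ℝ)) := by
    by_contra h
    rw [integral_undef h] at hf_prob
    norm_num at hf_prob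
  -- abbreviations
  set lam : ℕ → ℝ := fun n => 1 - β / Real.sqrt n with hlam
  set I2 : ℕ → ℝ := fun n => ∫ t in Ioi (K n), t * f t with hI2def
  -- splitting of integrals
  have hsplit : ∀ n, (∫ t in Ioc (0:ℝ) (K n), t * f t) + I2 n = 1 := by
    intro n
    rw [← hf_mean, ← Ioc_union_Ioi_eq_Ioi (hK_pos n).le,
      setIntegral_union (Ioc_disjoint_Ioi le_rfl) measurableSet_Ioi
        (hInt.mono_set Ioc_subset_Ioi_self)
        (hInt.mono_set (Ioi_subset_Ioi (hK_pos n).le))]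
  have hFbar_eq : ∀ n, Fbar (K n) = ∫ t in Ioi (K n), f t := by
    intro n
    have : (∫ t in Ioc (0:ℝ) (K n), f t) + (∫ t in Ioi (K n), f t) = 1 := by
      rw [← hf_prob, ← Ioc_union_Ioi_eq_Ioi (hK_pos n).le,
        setIntegral_union (Ioc_disjoint_Ioi le_rfl) measurableSet_Ioi
          (hIntf.mono_set Ioc_subset_Ioi_self)
          (hIntf.mono_set (Ioi_subset_Ioi (hK_pos n).le))]
    rw [hFbar]
    linarith
  -- lower bound for I2
  have hI2_lb : ∀ n, K n * Fbar (K n) ≤ I2 n := by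
    intro n
    rw [hFbar_eq, ← integral_const_mul]
    apply setIntegral_mono_on
    · exact (Integrable.const_mul (hIntf.mono_set (Ioi_subset_Ioi (hK_pos n).le)) _)
    · exact hInt.mono_set (Ioi_subset_Ioi (hK_pos n).le)
    · exact measurableSet_Ioi
    · intro x hx
      exact mul_le_mul_of_nonneg_right (le_of_lt hx) (hf_nonneg x)
  have hI2_pos : ∀ n, 0 < I2 n := fun n =>
    lt_of_lt_of_le (mul_pos (hK_pos n) (hFbar_pos _ (hK_pos n).le)) (hI2_lb n)
  -- sqrt n → ∞, lam → 1
  have hsqrt : Tendsto (fun n : ℕ => Real.sqrt n) atTop atTop := by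
    have := (tendsto_rpow_atTop (by norm_num : (0:ℝ) < 1/2)).comp
      (tendsto_natCast_atTop_atTop (R := ℝ))
    simpa [Function.comp_def, Real.sqrt_eq_rpow] using this
  have hlam_lim : Tendsto lam atTop (nhds 1) := by
    have h0 : Tendsto (fun n : ℕ => β / Real.sqrt n) atTop (nhds 0) :=
      Tendsto.div_atTop tendsto_const_nhds hsqrt
    have := (tendsto_const_nhds (x := (1:ℝ)) (f := atTop (α := ℕ))).sub h0
    simpa using this
  -- A n := √n * lam n * I2 n → ∞
  set A : ℕ → ℝ := fun n => Real.sqrt n * (lam n * I2 n) with hAdef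
  have hA : Tendsto A atTop atTop := by
    have hKT : Tendsto (fun n : ℕ => (1/2 : ℝ) * (K n * ((n:ℝ) ^ ((1:ℝ)/2 - δ) * Fbar (K n))))
        atTop atTop :=
      Tendsto.const_mul_atTop (by norm_num) (hK_tendsto.atTop_mul_atTop₀ hthresh)
    apply tendsto_atTop_mono' atTop _ hKT
    have hL : ∀ᶠ n : ℕ in atTop, (1/2 : ℝ) < lam n :=
      hlam_lim.eventually (eventually_gt_nhds (by norm_num))
    filter_upwards [hL, eventually_ge_atTop 1] with n hln hn1
    have hn1' : (1:ℝ) ≤ (n:ℝ) := by exact_mod_cast hn1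
    have hF : 0 < Fbar (K n) := hFbar_pos _ (hK_pos n).le
    have hrp : (n:ℝ) ^ ((1:ℝ)/2 - δ) ≤ Real.sqrt n := by
      rw [Real.sqrt_eq_rpow]
      exact Real.rpow_le_rpow_of_exponent_le hn1' (by linarith [hδ.1])
    have h1 : K n * ((n:ℝ) ^ ((1:ℝ)/2 - δ) * Fbar (K n)) ≤ Real.sqrt n * (K n * Fbar (K n)) := by
      have := mul_le_mul_of_nonneg_right hrp (le_of_lt (mul_pos (hK_pos n) hF))
      nlinarith [mul_pos (hK_pos n) hF]
    have hs : (0:ℝ) ≤ Real.sqrt n := Real.sqrt_nonneg _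
    have h2 : Real.sqrt n * (K n * Fbar (K n)) ≤ Real.sqrt n * I2 n :=
      mul_le_mul_of_nonneg_left (hI2_lb n) hs
    have h3 : (1/2 : ℝ) * (Real.sqrt n * I2 n) ≤ lam n * (Real.sqrt n * I2 n) :=
      mul_le_mul_of_nonneg_right (le_of_lt hln)
        (mul_nonneg hs (le_of_lt (hI2_pos n)))
    calc (1/2 : ℝ) * (K n * ((n:ℝ) ^ ((1:ℝ)/2 - δ) * Fbar (K n)))
        ≤ (1/2 : ℝ) * (Real.sqrt n * I2 n) := by
          have := h1.trans h2
          nlinarith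
      _ ≤ lam n * (Real.sqrt n * I2 n) := h3
      _ = A n := by ring
  -- the ratio equals 1 - β/(β + A n) eventually
  have hβA : Tendsto (fun n : ℕ => β + A n) atTop atTop :=
    tendsto_atTop_add_const_left atTop β hA
  have hApos : ∀ᶠ n : ℕ in atTop, 0 < A n := hA.eventually_gt_atTop 0
  have hkey : ∀ᶠ n : ℕ in atTop, ρ2 n / (1 - ρ1 n) = 1 - β / (β + A n) := by
    filter_upwards [hApos, eventually_ge_atTop 1] with n hAn hn1
    have hn1' : (1:ℝ) ≤ (n:ℝ) := by exact_mod_cast hn1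
    have hs : 0 < Real.sqrt n := Real.sqrt_pos.mpr (by linarith)
    have hden : 1 - ρ1 n = β / Real.sqrt n + lam n * I2 n := by
      have hs1 := hsplit n
      rw [hρ1]
      have : (∫ t in Ioc (0:ℝ) (K n), t * f t) = 1 - I2 n := by linarith
      rw [this]; ring
    have hnum : ρ2 n = lam n * I2 n := hρ2 n
    rw [hnum, hden]
    have hA_eq : A n = Real.sqrt n * (lam n * I2 n) := rfl
    have hβA_pos : 0 < β + A n := by linarith
    rw [hA_eq] at hAn hβA_pos ⊢
    have hL : 0 < lam n * I2 n := by nlinarith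
    have hd1 : β / Real.sqrt (n:ℝ) + lam n * I2 n ≠ 0 := by positivity
    have hsne : Real.sqrt (n:ℝ) ≠ 0 := ne_of_gt hs
    have hd2 : β + Real.sqrt (n:ℝ) * (lam n * I2 n) ≠ 0 := ne_of_gt hβA_pos
    field_simp
    ring
  have hlim : Tendsto (fun n : ℕ => 1 - β / (β + A n)) atTop (nhds 1) := by
    have h0 : Tendsto (fun n : ℕ => β / (β + A n)) atTop (nhds 0) :=
      Tendsto.div_atTop tendsto_const_nhds hβA
    have := (tendsto_const_nhds (x := (1:ℝ)) (f := atTop (α := ℕ))).sub h0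
    simpa using this
  exact hlim.congr' (hkey.mono fun n h => h.symm)
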